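/- For positive integers n and d, det V(n,d) = Π_{k=1}^{min(n,d)} (det W_k)^{C(n,k)}, where W_k is the power-product matrix generated by all compositions of d into k positive parts, i.e., the C(d-1,k-1) × C(d-1,k-1) matrix indexed by pairs (γ, δ) of compositions of d with k positive parts and entry Π_{i=1}^{k} γ_i^{δ_i}. -/

import Mathlib

/-- The index set `B(n,d)`: vectors in `ℕ^n` with entries summing to `d`. -/
abbrev Bnd (n d : ℕ) := {α : Fin n → ℕ // α ∈ Finset.Nat.antidiagonalTuple n d}

/-- The power-product matrix `V(n,d)` with entry `(α)^β = ∏ k, α k ^ β k`. -/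
noncomputable def powerProductMatrix (n d : ℕ) : Matrix (Bnd n d) (Bnd n d) ℝ :=
  Matrix.of fun α β => ∏ k, ((α : Fin n → ℕ) k : ℝ) ^ ((β : Fin n → ℕ) k)

/-- Compositions of `d` into `k` positive parts. -/
abbrev PosComp (k d : ℕ) :=
  {γ : Fin k → ℕ // γ ∈ (Finset.Nat.antidiagonalTuple k d).filter fun a => ∀ i, 0 < a i}

/-- The power-product matrix generated by all compositions of `d` into `k`
positive parts. -/
noncomputable def compPowerProductMatrix (k d : ℕ) : Matrix (PosComp k d) (PosComp k d) ℝ :=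
  Matrix.of fun γ δ => ∏ i, ((γ : Fin k → ℕ) i : ℝ) ^ ((δ : Fin k → ℕ) i)

namespace Stmt15Aux

open Finset Matrix OrderDual

variable {n d : ℕ}

/-- The support of an index vector. -/
def supp (α : Bnd n d) : Finset (Fin n) :=
  Finset.univ.filter fun i => 0 < (α : Fin n → ℕ) i

lemma mem_supp {α : Bnd n d} {i : Fin n} : i ∈ supp α ↔ 0 < (α : Fin n → ℕ) i := by
  simp [supp]

lemma apply_eq_zero_of_not_mem_supp {α : Bnd n d} {i : Fin n} (h : i ∉ supp α) :
    (α : Fin n → ℕ) i = 0 := by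
  rw [mem_supp] at h; omega

/-- The block-indexing function: the colex encoding of the support, dualised. -/
def bfun (n d : ℕ) : Bnd n d → (Colex (Finset (Fin n)))ᵒᵈ :=
  fun α => toDual (toColex (supp α))

/-- The equivalence between `Finset α` and `Colex α`. -/
def colexEquiv (α : Type*) : Finset α ≃ Colex (Finset α) :=
  ⟨toColex, ofColex, fun _ => rfl, fun _ => rfl⟩

noncomputable instance : Fintype (Colex (Finset (Fin n))) :=
  Fintype.ofEquiv (Finset (Fin n)) (colexEquiv (Fin n))

lemma bfun_eq_iff {α : Bnd n d} {S : Finset (Fin n)} :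
    bfun n d α = toDual (toColex S) ↔ supp α = S := by
  constructor
  · intro h
    have := toDual.injective h
    exact toColex_inj.mp this
  · intro h; rw [bfun, h]

lemma blockTriangular (n d : ℕ) :
    (powerProductMatrix n d).BlockTriangular (bfun n d) := by
  intro α β hlt
  by_contra hne
  have hsub : supp β ⊆ supp α := by
    intro i hi
    rw [mem_supp] at hi ⊢
    by_contra h0
    push_neg at h0
    apply hne
    apply Finset.prod_eq_zero (Finset.mem_univ i)
    have hα0 : ((α : Fin n → ℕ) i : ℝ) = 0 := by
      norm_cast; omega
    rw [hα0]
    exact zero_pow (Nat.pos_iff_ne_zero.mp hi)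
  have hle : bfun n d α ≤ bfun n d β :=
    toDual_le_toDual.mpr (Finset.Colex.toColex_le_toColex_of_subset hsub)
  exact absurd hlt (not_lt.mpr hle)

lemma prod_pow_eq (S : Finset (Fin n)) (α β : Fin n → ℕ)
    (hβ : ∀ j ∉ S, β j = 0) :
    ∏ i : Fin S.card, ((α (S.orderIsoOfFin rfl i) : ℝ)) ^ (β (S.orderIsoOfFin rfl i))
      = ∏ j, (α j : ℝ) ^ β j := by
  have h1 : ∏ i : Fin S.card, ((α (S.orderIsoOfFin rfl i) : ℝ)) ^ (β (S.orderIsoOfFin rfl i))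
      = ∏ x : S, ((α x : ℝ)) ^ (β x) :=
    Fintype.prod_equiv (S.orderIsoOfFin rfl).toEquiv _ _ (fun i => rfl)
  rw [h1, Finset.prod_coe_sort S (fun j => (α j : ℝ) ^ β j)]
  exact Finset.prod_subset (Finset.subset_univ S)
    (fun j _ hj => by rw [hβ j hj, pow_zero])

lemma sum_eq (S : Finset (Fin n)) (α : Fin n → ℕ) (hα : ∀ j ∉ S, α j = 0) :
    ∑ i : Fin S.card, α (S.orderIsoOfFin rfl i) = ∑ j, α j := by
  have h1 : ∑ i : Fin S.card, α (S.orderIsoOfFin rfl i) = ∑ x : S, α x :=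
    Fintype.sum_equiv (S.orderIsoOfFin rfl).toEquiv _ _ (fun i => rfl)
  rw [h1, Finset.sum_coe_sort S α]
  exact Finset.sum_subset (Finset.subset_univ S) (fun j _ hj => hα j hj)

/-- The fiber of `bfun` over (the code of) `S` is equivalent to compositions of `d`
into `S.card` positive parts. -/
noncomputable def fiberEquiv (n d : ℕ) (S : Finset (Fin n)) :
    {α : Bnd n d // bfun n d α = toDual (toColex S)} ≃ PosComp S.card d where
  toFun α := ⟨fun i => (α.1 : Fin n → ℕ) (S.orderIsoOfFin rfl i), by
    have hs : supp α.1 = S := bfun_eq_iff.mp α.2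
    rw [Finset.mem_filter, Finset.Nat.mem_antidiagonalTuple]
    constructor
    · rw [sum_eq S ((α.1 : Fin n → ℕ)) (fun j hj => apply_eq_zero_of_not_mem_supp
        (by rw [hs]; exact hj))]
      exact Finset.Nat.mem_antidiagonalTuple.mp α.1.2
    · intro i
      have : ((S.orderIsoOfFin rfl i : Fin n)) ∈ supp α.1 := by
        rw [hs]; exact (S.orderIsoOfFin rfl i).2
      exact mem_supp.mp this⟩
  invFun γ := ⟨⟨fun j => if h : j ∈ S then γ.1 ((S.orderIsoOfFin rfl).symm ⟨j, h⟩) else 0, by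
      obtain ⟨hsum, hpos⟩ := Finset.mem_filter.mp γ.2
      rw [Finset.Nat.mem_antidiagonalTuple] at hsum
      rw [Finset.Nat.mem_antidiagonalTuple]
      rw [← sum_eq S
        (fun j => if h : j ∈ S then γ.1 ((S.orderIsoOfFin rfl).symm ⟨j, h⟩) else 0)
        (fun j hj => dif_neg hj)]
      refine Eq.trans (Finset.sum_congr rfl fun i _ => ?_) hsum
      rw [dif_pos (S.orderIsoOfFin rfl i).2]
      congr 1
      rw [Subtype.coe_eta, OrderIso.symm_apply_apply]⟩, by
    apply bfun_eq_iff.mpr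
    obtain ⟨_, hpos⟩ := Finset.mem_filter.mp γ.2
    ext j
    rw [mem_supp]
    constructor
    · intro hj
      by_contra h
      simp only [dif_neg h] at hj
      omega
    · intro hj
      simpa only [dif_pos hj] using hpos ((S.orderIsoOfFin rfl).symm ⟨j, hj⟩)⟩
  left_inv α := by
    apply Subtype.ext; apply Subtype.ext
    funext j
    have hs : supp α.1 = S := bfun_eq_iff.mp α.2
    by_cases h : j ∈ S
    · simp only [dif_pos h, OrderIso.apply_symm_apply]
    · simp only [dif_neg h]
      exact (apply_eq_zero_of_not_mem_supp (by rw [hs]; exact h)).symm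
  right_inv γ := by
    apply Subtype.ext
    funext i
    simp only [dif_pos (S.orderIsoOfFin rfl i).2]
    congr 1
    rw [Subtype.coe_eta, OrderIso.symm_apply_apply]

lemma block_det (n d : ℕ) (S : Finset (Fin n)) :
    ((powerProductMatrix n d).toSquareBlock (bfun n d) (toDual (toColex S))).det
      = (compPowerProductMatrix S.card d).det := by
  rw [← Matrix.det_submatrix_equiv_self (fiberEquiv n d S) (compPowerProductMatrix S.card d)]
  congr 1
  ext α β
  have hβ : supp β.1 = S := bfun_eq_iff.mp β.2
  simp only [Matrix.toSquareBlock_def, Matrix.submatrix_apply, powerProductMatrix,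
    compPowerProductMatrix, Matrix.of_apply, fiberEquiv, Equiv.coe_fn_mk]
  exact (prod_pow_eq S _ _ (fun j hj => apply_eq_zero_of_not_mem_supp (by rw [hβ]; exact hj))).symm

lemma posComp_isEmpty {k d : ℕ} (hd : 0 < d) (h : k = 0 ∨ d < k) : IsEmpty (PosComp k d) := by
  constructor
  rintro ⟨γ, hγ⟩
  obtain ⟨hsum, hpos⟩ := Finset.mem_filter.mp hγ
  rw [Finset.Nat.mem_antidiagonalTuple] at hsum
  rcases h with rfl | h
  · simp at hsum; omega
  · have : k ≤ ∑ i, γ i := by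
      calc k = ∑ _i : Fin k, 1 := by simp
        _ ≤ ∑ i, γ i := Finset.sum_le_sum fun i _ => hpos i
    omega

end Stmt15Aux

theorem stmt15 (n d : ℕ) (hn : 0 < n) (hd : 0 < d) :
    (powerProductMatrix n d).det
      = ∏ k ∈ Finset.Icc 1 (min n d), (compPowerProductMatrix k d).det ^ n.choose k := by
  classical
  open Stmt15Aux Finset OrderDual in
  calc (powerProductMatrix n d).det
      = ∏ a : (Colex (Finset (Fin n)))ᵒᵈ,
          ((powerProductMatrix n d).toSquareBlock (bfun n d) a).det :=
        (Stmt15Aux.blockTriangular n d).det_fintype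
    _ = ∏ S : Finset (Fin n),
          ((powerProductMatrix n d).toSquareBlock (bfun n d) (toDual (toColex S))).det := by
        rw [← Equiv.prod_comp ((colexEquiv (Fin n)).trans OrderDual.toDual)
          (fun a => ((powerProductMatrix n d).toSquareBlock (bfun n d) a).det)]
        rfl
    _ = ∏ S : Finset (Fin n), (compPowerProductMatrix S.card d).det := by
        exact Finset.prod_congr rfl fun S _ => Stmt15Aux.block_det n d S
    _ = ∏ j ∈ Finset.range (n + 1), ∏ S ∈ Finset.powersetCard j (Finset.univ : Finset (Fin n)),
          (compPowerProductMatrix S.card d).det := by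
        rw [← Finset.powerset_univ, Finset.prod_powerset]
        simp [Finset.card_univ]
    _ = ∏ j ∈ Finset.range (n + 1), (compPowerProductMatrix j d).det ^ n.choose j := by
        refine Finset.prod_congr rfl fun j _ => ?_
        rw [Finset.prod_congr rfl
          (fun S hS => by rw [(Finset.mem_powersetCard.mp hS).2] :
            ∀ S ∈ Finset.powersetCard j (Finset.univ : Finset (Fin n)), _),
          Finset.prod_const, Finset.card_powersetCard, Finset.card_univ, Fintype.card_fin]
    _ = ∏ k ∈ Finset.Icc 1 (min n d), (compPowerProductMatrix k d).det ^ n.choose k := by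
        symm
        apply Finset.prod_subset
        · intro k hk
          rw [Finset.mem_Icc] at hk
          rw [Finset.mem_range]
          omega
        · intro k hk hk'
          rw [Finset.mem_range] at hk
          rw [Finset.mem_Icc] at hk'
          have : k = 0 ∨ d < k := by omega
          haveI := Stmt15Aux.posComp_isEmpty hd this
          rw [Matrix.det_isEmpty, one_pow]
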